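/- arXiv:2311.08522 — 4 statements merged into one kernel-verified Lean document; each statement's English description precedes it below -/
import Mathlib

section
/- Let g : ℂ⁴ → ℍ(ℂ) have holomorphic Cartan-basis components, and define f(t_0,t_1,t_2,t_3) := g(z_1,z_2,z_3,z_4) where z_1 = t_0 − i t_1, z_2 = t_0 + i t_1, z_3 = −i t_2 − t_3, z_4 = −i t_2 + t_3. Then f satisfies the Cauchy–Fueter type equation ∂f/∂t_0 + I ∂f/∂t_1 + J ∂f/∂t_2 + K ∂f/∂t_3 = 0 on ℂ⁴ if and only if g satisfies the equation e_2 ∂g/∂z_1 + e_1 ∂g/∂z_2 − e_4 ∂g/∂z_3 − e_3 ∂g/∂z_4 = 0 on ℂ⁴. Indeed the operator identity ∂f/∂t_0 + I ∂f/∂t_1 + J ∂f/∂t_2 + K ∂f/∂t_3 = 2( e_2 ∂g/∂z_1 + e_1 ∂g/∂z_2 − e_4 ∂g/∂z_3 − e_3 ∂g/∂z_4 ) holds pointwise. -/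
noncomputable section

open Quaternion

/-- The quaternion units in the complex quaternion algebra ℍ(ℂ). -/
def qI : ℍ[ℂ] := ⟨0, 1, 0, 0⟩
def qJ : ℍ[ℂ] := ⟨0, 0, 1, 0⟩
def qK : ℍ[ℂ] := ⟨0, 0, 0, 1⟩

/-- The Cartan basis `e₁, e₂, e₃, e₄` of ℍ(ℂ) (indexed from 0). -/
def ee : Fin 4 → ℍ[ℂ] :=
  ![(2⁻¹ : ℂ) • (1 + Complex.I • qI),
    (2⁻¹ : ℂ) • (1 - Complex.I • qI),
    (2⁻¹ : ℂ) • (Complex.I • qJ - qK),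
    (2⁻¹ : ℂ) • (Complex.I • qJ + qK)]

/-- Componentwise complex partial derivative `∂u/∂z_j` for `u : ℂ⁴ → ℂ`. -/
def pd (j : Fin 4) (u : (Fin 4 → ℂ) → ℂ) (z : Fin 4 → ℂ) : ℂ :=
  fderiv ℂ u z (Pi.single j 1)

/-- Componentwise partial derivative `∂f/∂z_j` of the ℍ(ℂ)-valued function
with Cartan components `f 0, f 1, f 2, f 3`. -/
def Dc (f : Fin 4 → (Fin 4 → ℂ) → ℂ) (j : Fin 4) (z : Fin 4 → ℂ) : ℍ[ℂ] :=
  ∑ k, pd j (f k) z • ee k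

/-- The change of variables `z₁ = t₀ - i t₁, z₂ = t₀ + i t₁, z₃ = -i t₂ - t₃,
z₄ = -i t₂ + t₃` (indexed from 0). -/
def zmap (t : Fin 4 → ℂ) : Fin 4 → ℂ :=
  ![t 0 - Complex.I * t 1, t 0 + Complex.I * t 1,
    -Complex.I * t 2 - t 3, -Complex.I * t 2 + t 3]

/-- `zmap` as a linear map. -/
def zmapₗ : (Fin 4 → ℂ) →ₗ[ℂ] (Fin 4 → ℂ) where
  toFun := zmap
  map_add' := by intro x y; funext i; fin_cases i <;> simp [zmap] <;> ring
  map_smul' := by intro c x; funext i; fin_cases i <;> simp [zmap] <;> ring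

/-- `zmap` as a continuous linear map. -/
def zmapL : (Fin 4 → ℂ) →L[ℂ] (Fin 4 → ℂ) := zmapₗ.toContinuousLinearMap

lemma single_expand (v : Fin 4 → ℂ) : v = ∑ l, v l • (Pi.single l 1 : Fin 4 → ℂ) := by
  funext m
  simp [Finset.sum_apply, Pi.single_apply]

/-- Chain rule for `pd` through the linear change of variables `zmap`. -/
lemma pd_comp (u : (Fin 4 → ℂ) → ℂ) (hu : Differentiable ℂ u) (j : Fin 4) (t : Fin 4 → ℂ) :
    pd j (fun t => u (zmap t)) t = ∑ l, zmap (Pi.single j 1) l * pd l u (zmap t) := by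
  have h1 : (fun t => u (zmap t)) = u ∘ zmapL := rfl
  unfold pd
  rw [h1, fderiv_comp t (hu.differentiableAt) (zmapL.differentiable.differentiableAt)]
  simp only [ContinuousLinearMap.fderiv, ContinuousLinearMap.coe_comp', Function.comp_apply]
  have h2 : zmapL (Pi.single j 1) = ∑ l, zmap (Pi.single j 1) l • (Pi.single l 1 : Fin 4 → ℂ) :=
    single_expand _
  rw [h2, map_sum]
  simp only [map_smul, smul_eq_mul]
  rfl

set_option maxHeartbeats 2000000 in
/-- The key algebraic identity in ℍ(ℂ). -/
lemma key (a : Fin 4 → Fin 4 → ℂ) :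
    (∑ k, (∑ l, zmap (Pi.single (0 : Fin 4) 1) l * a l k) • ee k)
      + qI * (∑ k, (∑ l, zmap (Pi.single (1 : Fin 4) 1) l * a l k) • ee k)
      + qJ * (∑ k, (∑ l, zmap (Pi.single (2 : Fin 4) 1) l * a l k) • ee k)
      + qK * (∑ k, (∑ l, zmap (Pi.single (3 : Fin 4) 1) l * a l k) • ee k)
    = (2 : ℂ) • (ee 1 * (∑ k, a 0 k • ee k) + ee 0 * (∑ k, a 1 k • ee k)
        - ee 3 * (∑ k, a 2 k • ee k) - ee 2 * (∑ k, a 3 k • ee k)) := by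
  have hsingle : ∀ (j l : Fin 4), (Pi.single j 1 : Fin 4 → ℂ) l = if j = l then 1 else 0 := by
    intro j l
    simp [Pi.single_apply, eq_comm]
  simp only [Fin.sum_univ_four, zmap, hsingle, Matrix.cons_val_zero, Matrix.cons_val_one,
    Matrix.head_cons, Matrix.cons_val_two, Matrix.tail_cons, Matrix.cons_val_three]
  simp only [Fin.reduceEq, reduceIte, if_true, if_false, mul_one, mul_zero, zero_mul, one_mul,
    add_zero, zero_add]
  ext <;>
    simp only [ee, Matrix.cons_val_zero, Matrix.cons_val_one, Matrix.head_cons,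
      Matrix.cons_val_two, Matrix.tail_cons, Matrix.cons_val_three,
      Quaternion.re_add, Quaternion.imI_add, Quaternion.imJ_add, Quaternion.imK_add,
      Quaternion.re_sub, Quaternion.imI_sub, Quaternion.imJ_sub, Quaternion.imK_sub,
      Quaternion.re_mul, Quaternion.imI_mul, Quaternion.imJ_mul, Quaternion.imK_mul,
      Quaternion.re_smul, Quaternion.imI_smul, Quaternion.imJ_smul, Quaternion.imK_smul,
      Quaternion.re_one, Quaternion.imI_one, Quaternion.imJ_one, Quaternion.imK_one,
      QuaternionAlgebra.re_add, QuaternionAlgebra.imI_add, QuaternionAlgebra.imJ_add,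
      QuaternionAlgebra.imK_add, QuaternionAlgebra.re_sub, QuaternionAlgebra.imI_sub,
      QuaternionAlgebra.imJ_sub, QuaternionAlgebra.imK_sub, QuaternionAlgebra.re_mul,
      QuaternionAlgebra.imI_mul, QuaternionAlgebra.imJ_mul, QuaternionAlgebra.imK_mul,
      QuaternionAlgebra.re_smul, QuaternionAlgebra.imI_smul, QuaternionAlgebra.imJ_smul,
      QuaternionAlgebra.imK_smul, QuaternionAlgebra.re_one, QuaternionAlgebra.imI_one,
      QuaternionAlgebra.imJ_one, QuaternionAlgebra.imK_one, smul_eq_mul] <;>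
    simp only [qI, qJ, qK] <;>
    ring_nf

/-- The inverse change of variables. -/
def zinv (z : Fin 4 → ℂ) : Fin 4 → ℂ :=
  ![(z 0 + z 1) / 2, (z 1 - z 0) / (2 * Complex.I),
    (z 2 + z 3) / (-2 * Complex.I), (z 3 - z 2) / 2]

lemma zmap_zinv (z : Fin 4 → ℂ) : zmap (zinv z) = z := by
  have hI := Complex.I_ne_zero
  have hII : Complex.I * Complex.I = -1 := Complex.I_mul_I
  funext i
  fin_cases i <;>
    simp only [zmap, zinv, Matrix.cons_val_zero, Matrix.cons_val_one, Matrix.head_cons,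
      Matrix.cons_val_two, Matrix.tail_cons, Matrix.cons_val_three] <;>
    field_simp <;>
    ring_nf <;>
    simp [Complex.I_sq] <;>
    ring

/-- `f(t) = g(z(t))` satisfies the Cauchy–Fueter type equation
iff `g` satisfies `e₂ ∂g/∂z₁ + e₁ ∂g/∂z₂ - e₄ ∂g/∂z₃ - e₃ ∂g/∂z₄ = 0`;
indeed the corresponding operator identity (with factor 2) holds pointwise. -/
theorem cauchyFueter_iff_cartan_equation
    (g : Fin 4 → (Fin 4 → ℂ) → ℂ) (hg : ∀ k, Differentiable ℂ (g k))
    (F : Fin 4 → (Fin 4 → ℂ) → ℂ) (hF : ∀ k t, F k t = g k (zmap t)) :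
    (∀ t : Fin 4 → ℂ,
        Dc F 0 t + qI * Dc F 1 t + qJ * Dc F 2 t + qK * Dc F 3 t
          = (2 : ℂ) • (ee 1 * Dc g 0 (zmap t) + ee 0 * Dc g 1 (zmap t)
              - ee 3 * Dc g 2 (zmap t) - ee 2 * Dc g 3 (zmap t))) ∧
    ((∀ t : Fin 4 → ℂ,
        Dc F 0 t + qI * Dc F 1 t + qJ * Dc F 2 t + qK * Dc F 3 t = 0) ↔
      ∀ z : Fin 4 → ℂ,
        ee 1 * Dc g 0 z + ee 0 * Dc g 1 z - ee 3 * Dc g 2 z - ee 2 * Dc g 3 z = 0) := by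
  have hF' : ∀ k, F k = fun t => g k (zmap t) := fun k => funext (hF k)
  have hid : ∀ t : Fin 4 → ℂ,
      Dc F 0 t + qI * Dc F 1 t + qJ * Dc F 2 t + qK * Dc F 3 t
        = (2 : ℂ) • (ee 1 * Dc g 0 (zmap t) + ee 0 * Dc g 1 (zmap t)
            - ee 3 * Dc g 2 (zmap t) - ee 2 * Dc g 3 (zmap t)) := by
    intro t
    simp only [Dc, hF', pd_comp _ (hg _)]
    exact key (fun l k => pd l (g k) (zmap t))
  refine ⟨hid, ?_, ?_⟩
  · intro h z
    have h2 : (0 : ℍ[ℂ]) = (2 : ℂ) • (ee 1 * Dc g 0 z + ee 0 * Dc g 1 z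
        - ee 3 * Dc g 2 z - ee 2 * Dc g 3 z) := by
      have := hid (zinv z)
      rw [zmap_zinv] at this
      rw [← this, h (zinv z)]
    set x := ee 1 * Dc g 0 z + ee 0 * Dc g 1 z - ee 3 * Dc g 2 z - ee 2 * Dc g 3 z with hx
    calc x = ((2 : ℂ)⁻¹ * 2) • x := by norm_num
      _ = (2 : ℂ)⁻¹ • ((2 : ℂ) • x) := by rw [smul_smul]
      _ = 0 := by rw [← h2, smul_zero]
  · intro h t
    rw [hid t, h (zmap t), smul_zero]
end
end

section
/- Let g, h : ℂ² → ℂ be holomorphic and define f : ℂ⁴ → ℍ(ℂ) by f(z_1,z_2,z_3,z_4) = g(z_2,z_3) e_1 + h(z_1,z_4) e_2 + ( z_3 ∂h/∂w_1(z_1,z_4) + z_2 ∂h/∂w_2(z_1,z_4) ) e_3 + ( z_4 ∂g/∂w_1(z_2,z_3) + z_1 ∂g/∂w_2(z_2,z_3) ) e_4. Then f satisfies the equation e_2 ∂f/∂z_1 + e_1 ∂f/∂z_2 − e_4 ∂f/∂z_3 − e_3 ∂f/∂z_4 = 0 on ℂ⁴. -/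
noncomputable section

open Quaternion

/-- Complex partial derivative in the first argument of `u : ℂ² → ℂ`. -/
def pda (u : ℂ × ℂ → ℂ) (p : ℂ × ℂ) : ℂ := fderiv ℂ u p (1, 0)

/-- Complex partial derivative in the second argument of `u : ℂ² → ℂ`. -/
def pdb (u : ℂ × ℂ → ℂ) (p : ℂ × ℂ) : ℂ := fderiv ℂ u p (0, 1)

set_option maxHeartbeats 1000000

section Aux
open MeasureTheory Metric Complex Real

private lemma oneVar (k : ℕ) (cc a : ℂ) (hne : cc ≠ a) :
    HasDerivAt (fun t : ℂ => ((cc - t)⁻¹) ^ (k+1))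
      (((k:ℂ)+1) * ((cc - a)⁻¹) ^ (k+2)) a := by
  have h1 : HasDerivAt (fun t : ℂ => cc - t) (-1) a := (hasDerivAt_id a).const_sub cc
  have h2 := h1.inv (sub_ne_zero.2 hne)
  have h3 := h2.pow (k+1)
  refine h3.congr_deriv ?_
  simp only [Pi.inv_apply]
  rw [Nat.add_sub_cancel, neg_neg, one_div, ← inv_pow]
  push_cast
  ring

private lemma keyDiff (h : ℂ × ℂ → ℂ) (hh : Differentiable ℂ h) (u : ℂ × ℂ) :
    Differentiable ℂ (fun p : ℂ × ℂ => fderiv ℂ h p u) := by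
  intro p₀
  set μ : Measure ℝ := volume.restrict (Set.Ioc (0:ℝ) (2*π)) with hμ
  haveI : IsFiniteMeasure μ :=
    ⟨by rw [hμ, Measure.restrict_apply_univ]; exact measure_Ioc_lt_top⟩
  set w : ℝ → ℂ := circleMap p₀.1 2 with hw
  set v : ℝ → ℂ := circleMap p₀.2 2 with hv
  set c : ℝ → ℂ := fun θ => circleMap 0 2 θ * Complex.I with hc
  -- norm estimates
  have hwnorm : ∀ (θ : ℝ) (p : ℂ × ℂ), p ∈ ball p₀ 1 → 1 ≤ ‖w θ - p.1‖ := by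
    intro θ p hp
    have h1 : ‖w θ - p₀.1‖ = 2 := by
      rw [hw, circleMap_sub_center, norm_circleMap_zero]; norm_num
    have h2 : ‖p.1 - p₀.1‖ < 1 := by
      have := norm_fst_le (p - p₀)
      have h3 : dist p p₀ < 1 := mem_ball.1 hp
      rw [dist_eq_norm] at h3
      calc ‖p.1 - p₀.1‖ = ‖(p - p₀).1‖ := rfl
        _ ≤ ‖p - p₀‖ := norm_fst_le _
        _ < 1 := h3
    have h4 : ‖w θ - p₀.1‖ - ‖p.1 - p₀.1‖ ≤ ‖(w θ - p₀.1) - (p.1 - p₀.1)‖ :=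
      norm_sub_norm_le _ _
    have h5 : (w θ - p₀.1) - (p.1 - p₀.1) = w θ - p.1 := by ring
    rw [h5, h1] at h4
    linarith
  have hvnorm : ∀ (θ : ℝ) (p : ℂ × ℂ), p ∈ ball p₀ 1 → 1 ≤ ‖v θ - p.2‖ := by
    intro θ p hp
    have h1 : ‖v θ - p₀.2‖ = 2 := by
      rw [hv, circleMap_sub_center, norm_circleMap_zero]; norm_num
    have h2 : ‖p.2 - p₀.2‖ < 1 := by
      have h3 : dist p p₀ < 1 := mem_ball.1 hp
      rw [dist_eq_norm] at h3
      calc ‖p.2 - p₀.2‖ = ‖(p - p₀).2‖ := rfl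
        _ ≤ ‖p - p₀‖ := norm_snd_le _
        _ < 1 := h3
    have h4 : ‖v θ - p₀.2‖ - ‖p.2 - p₀.2‖ ≤ ‖(v θ - p₀.2) - (p.2 - p₀.2)‖ :=
      norm_sub_norm_le _ _
    have h5 : (v θ - p₀.2) - (p.2 - p₀.2) = v θ - p.2 := by ring
    rw [h5, h1] at h4
    linarith
  have hwne : ∀ (θ : ℝ) (p : ℂ × ℂ), p ∈ ball p₀ 1 → w θ - p.1 ≠ 0 := by
    intro θ p hp he
    have := hwnorm θ p hp
    rw [he, norm_zero] at this; linarith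
  have hvne : ∀ (θ : ℝ) (p : ℂ × ℂ), p ∈ ball p₀ 1 → v θ - p.2 ≠ 0 := by
    intro θ p hp he
    have := hvnorm θ p hp
    rw [he, norm_zero] at this; linarith
  -- bound on h
  obtain ⟨M, hM⟩ : ∃ M, ∀ x : ℝ × ℝ, ‖h (w x.1, v x.2)‖ ≤ M := by
    obtain ⟨M, hM⟩ := ((isCompact_sphere p₀.1 2).prod (isCompact_sphere p₀.2 2)).exists_bound_of_continuousOn
      hh.continuous.continuousOn
    exact ⟨M, fun x => hM _ ⟨circleMap_mem_sphere _ (by norm_num) _,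
      circleMap_mem_sphere _ (by norm_num) _⟩⟩
  have hM0 : 0 ≤ M := le_trans (norm_nonneg _) (hM (0, 0))
  have hcnorm : ∀ θ, ‖c θ‖ = 2 := by
    intro θ
    rw [hc]
    simp only [norm_mul, norm_circleMap_zero, Complex.norm_I]
    norm_num
  -- the kernels
  set E : ℕ → ℕ → (ℂ × ℂ) → (ℝ × ℝ) → ℂ := fun n m p x =>
    (c x.1 * c x.2) * (((w x.1 - p.1)⁻¹) ^ n * ((v x.2 - p.2)⁻¹) ^ m * h (w x.1, v x.2)) with hE
  set K : ℕ → ℕ → (ℂ × ℂ) → ℂ := fun n m p => ∫ x, E n m p x ∂(μ.prod μ) with hK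
  have hEb : ∀ n m (p : ℂ × ℂ) x, p ∈ ball p₀ 1 → ‖E n m p x‖ ≤ 4 * M := by
    intro n m p x hp
    have f1 : ‖(w x.1 - p.1)⁻¹‖ ≤ 1 := by
      rw [norm_inv]; exact inv_le_one_of_one_le₀ (hwnorm x.1 p hp)
    have f2 : ‖(v x.2 - p.2)⁻¹‖ ≤ 1 := by
      rw [norm_inv]; exact inv_le_one_of_one_le₀ (hvnorm x.2 p hp)
    calc ‖E n m p x‖
        = 2 * 2 * (‖(w x.1 - p.1)⁻¹‖ ^ n * (‖(v x.2 - p.2)⁻¹‖ ^ m * ‖h (w x.1, v x.2)‖)) := by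
          rw [hE]; simp only [norm_mul, norm_pow, hcnorm]; ring
      _ ≤ 2 * 2 * (1 ^ n * (1 ^ m * M)) := by
          gcongr <;> first | exact f1 | exact f2 | exact hM x | positivity
      _ = 4 * M := by norm_num
  have hwcont : Continuous fun x : ℝ × ℝ => w x.1 := (continuous_circleMap _ _).comp continuous_fst
  have hvcont : Continuous fun x : ℝ × ℝ => v x.2 := (continuous_circleMap _ _).comp continuous_snd
  have hccont : Continuous c := by
    rw [hc]; exact (continuous_circleMap _ _).mul continuous_const
  have hEcont : ∀ n m (p : ℂ × ℂ), p ∈ ball p₀ 1 → Continuous (E n m p) := by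
    intro n m p hp
    rw [hE]
    refine ((hccont.comp continuous_fst).mul (hccont.comp continuous_snd)).mul ?_
    refine (((hwcont.sub continuous_const).inv₀ (fun x => hwne x.1 p hp)).pow n).mul ?_ |>.mul ?_
    · exact ((hvcont.sub continuous_const).inv₀ (fun x => hvne x.2 p hp)).pow m
    · exact hh.continuous.comp (hwcont.prodMk hvcont)
  have hEint : ∀ n m (p : ℂ × ℂ), p ∈ ball p₀ 1 → Integrable (E n m p) (μ.prod μ) := by
    intro n m p hp
    exact Integrable.mono' (integrable_const (4 * M)) (hEcont n m p hp).aestronglyMeasurable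
      (Filter.Eventually.of_forall fun x => hEb n m p x hp)
  -- derivative of the integrand
  set L : ℕ → ℕ → (ℂ × ℂ) → (ℝ × ℝ) → (ℂ × ℂ →L[ℂ] ℂ) := fun n m p x =>
    (((n:ℂ)+1) * E (n+2) (m+1) p x) • ContinuousLinearMap.fst ℂ ℂ ℂ
      + (((m:ℂ)+1) * E (n+1) (m+2) p x) • ContinuousLinearMap.snd ℂ ℂ ℂ with hL
  have hEderiv : ∀ n m (x : ℝ × ℝ) (p : ℂ × ℂ), p ∈ ball p₀ 1 →
      HasFDerivAt (fun q => E (n+1) (m+1) q x) (L n m p x) p := by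
    intro n m x p hp
    have hwne' : w x.1 ≠ p.1 := fun he => hwne x.1 p hp (by rw [he]; ring)
    have hvne' : v x.2 ≠ p.2 := fun he => hvne x.2 p hp (by rw [he]; ring)
    have hF := (oneVar n (w x.1) p.1 hwne').comp_hasFDerivAt p
      (hasFDerivAt_fst (𝕜 := ℂ) (p := p))
    have hG := (oneVar m (v x.2) p.2 hvne').comp_hasFDerivAt p
      (hasFDerivAt_snd (𝕜 := ℂ) (p := p))
    have hprod := hF.mul hG
    have hfull := hprod.const_mul (c x.1 * c x.2 * h (w x.1, v x.2))
    have heq : (fun q : ℂ × ℂ => E (n+1) (m+1) q x)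
        = fun q => (c x.1 * c x.2 * h (w x.1, v x.2)) *
            (((w x.1 - q.1)⁻¹) ^ (n+1) * ((v x.2 - q.2)⁻¹) ^ (m+1)) := by
      funext q; rw [hE]; ring
    rw [heq]
    refine hfull.congr_fderiv ?_
    apply ContinuousLinearMap.ext
    intro y
    rw [hL, hE]
    simp only [ContinuousLinearMap.add_apply, ContinuousLinearMap.smul_apply,
      ContinuousLinearMap.coe_fst', ContinuousLinearMap.coe_snd', smul_eq_mul,
      Function.comp_apply, Function.comp]
    push_cast
    ring
  -- bound on the derivative
  have hfstn : ‖ContinuousLinearMap.fst ℂ ℂ ℂ‖ ≤ 1 := by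
    apply ContinuousLinearMap.opNorm_le_bound _ zero_le_one
    intro y; rw [one_mul]; exact norm_fst_le y
  have hsndn : ‖ContinuousLinearMap.snd ℂ ℂ ℂ‖ ≤ 1 := by
    apply ContinuousLinearMap.opNorm_le_bound _ zero_le_one
    intro y; rw [one_mul]; exact norm_snd_le y
  have hLb : ∀ n m (q : ℂ × ℂ) x, q ∈ ball p₀ 1 →
      ‖L n m q x‖ ≤ ((n:ℝ)+1) * (4*M) + ((m:ℝ)+1) * (4*M) := by
    intro n m q x hq
    rw [hL]
    calc ‖(((n:ℂ)+1) * E (n+2) (m+1) q x) • ContinuousLinearMap.fst ℂ ℂ ℂ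
          + (((m:ℂ)+1) * E (n+1) (m+2) q x) • ContinuousLinearMap.snd ℂ ℂ ℂ‖
        ≤ ‖(((n:ℂ)+1) * E (n+2) (m+1) q x) • ContinuousLinearMap.fst ℂ ℂ ℂ‖
          + ‖(((m:ℂ)+1) * E (n+1) (m+2) q x) • ContinuousLinearMap.snd ℂ ℂ ℂ‖ := norm_add_le _ _
      _ ≤ ‖((n:ℂ)+1)‖ * ‖E (n+2) (m+1) q x‖ * ‖ContinuousLinearMap.fst ℂ ℂ ℂ‖
          + ‖((m:ℂ)+1)‖ * ‖E (n+1) (m+2) q x‖ * ‖ContinuousLinearMap.snd ℂ ℂ ℂ‖ := by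
            refine add_le_add
              ((norm_smul_le (((n:ℂ)+1) * E (n+2) (m+1) q x) (ContinuousLinearMap.fst ℂ ℂ ℂ)).trans_eq ?_)
              ((norm_smul_le (((m:ℂ)+1) * E (n+1) (m+2) q x) (ContinuousLinearMap.snd ℂ ℂ ℂ)).trans_eq ?_) <;>
              rw [norm_mul]
      _ ≤ (((n:ℝ)+1) * (4*M)) * 1 + (((m:ℝ)+1) * (4*M)) * 1 := by
            have e1 : ‖((n:ℂ)+1)‖ = (n:ℝ)+1 := by
              rw [show ((n:ℂ)+1) = ((n+1 : ℕ) : ℂ) by push_cast; ring, Complex.norm_natCast]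
              push_cast; ring
            have e2 : ‖((m:ℂ)+1)‖ = (m:ℝ)+1 := by
              rw [show ((m:ℂ)+1) = ((m+1 : ℕ) : ℂ) by push_cast; ring, Complex.norm_natCast]
              push_cast; ring
            rw [e1, e2]
            gcongr <;> first | exact hEb _ _ _ _ hq | assumption | positivity
      _ = ((n:ℝ)+1) * (4*M) + ((m:ℝ)+1) * (4*M) := by ring
  have hLcont : ∀ n m (p : ℂ × ℂ), p ∈ ball p₀ 1 → Continuous (L n m p) := by
    intro n m p hp
    rw [hL]
    exact ((continuous_const.mul (hEcont _ _ p hp)).smul continuous_const).add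
      ((continuous_const.mul (hEcont _ _ p hp)).smul continuous_const)
  -- derivative of K
  have hKderiv : ∀ n m (p : ℂ × ℂ), p ∈ ball p₀ (1/2) →
      HasFDerivAt (K (n+1) (m+1))
        ((((n:ℂ)+1) * K (n+2) (m+1) p) • ContinuousLinearMap.fst ℂ ℂ ℂ
          + (((m:ℂ)+1) * K (n+1) (m+2) p) • ContinuousLinearMap.snd ℂ ℂ ℂ) p := by
    intro n m p hp
    have hp1 : p ∈ ball p₀ 1 := ball_subset_ball (by norm_num) hp
    have hsub : ball p (1/2) ⊆ ball p₀ 1 := by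
      apply ball_subset_ball'
      have := mem_ball.1 hp
      linarith
    have main := hasFDerivAt_integral_of_dominated_of_fderiv_le
      (F := fun q x => E (n+1) (m+1) q x) (F' := fun q x => L n m q x) (x₀ := p)
      (bound := fun _ => ((n:ℝ)+1) * (4*M) + ((m:ℝ)+1) * (4*M))
      (μ := μ.prod μ) (s := ball p (1/2)) (ball_mem_nhds p (by norm_num))
      (Filter.eventually_of_mem (isOpen_ball.mem_nhds hp1)
        (fun q hq => (hEcont _ _ q hq).aestronglyMeasurable))
      (hEint _ _ p hp1)
      (hLcont n m p hp1).aestronglyMeasurable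
      (Filter.Eventually.of_forall fun x q hq => hLb n m q x (hsub hq))
      (integrable_const _)
      (Filter.Eventually.of_forall fun x q hq => hEderiv n m x q (hsub hq))
    have hint1 : Integrable (fun x => (((n:ℂ)+1) * E (n+2) (m+1) p x)) (μ.prod μ) :=
      (hEint _ _ p hp1).const_mul _
    have hint2 : Integrable (fun x => (((m:ℂ)+1) * E (n+1) (m+2) p x)) (μ.prod μ) :=
      (hEint _ _ p hp1).const_mul _
    have hintegral : (∫ x, L n m p x ∂(μ.prod μ))
        = (((n:ℂ)+1) * K (n+2) (m+1) p) • ContinuousLinearMap.fst ℂ ℂ ℂ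
          + (((m:ℂ)+1) * K (n+1) (m+2) p) • ContinuousLinearMap.snd ℂ ℂ ℂ := by
      rw [hL]
      rw [integral_add (hint1.smul_const _) (hint2.smul_const _),
        _root_.integral_smul_const, _root_.integral_smul_const,
        MeasureTheory.integral_const_mul, MeasureTheory.integral_const_mul]
    rw [← hintegral]
    exact main
  -- Cauchy integral representation
  have h2pI : (2 * (π:ℂ) * Complex.I) ≠ 0 := by
    simp [Real.pi_ne_zero, Complex.I_ne_zero, Complex.ofReal_ne_zero]
  have hCauchy : ∀ p ∈ ball p₀ 1, K 1 1 p
      = (2 * (π:ℂ) * Complex.I) * ((2 * (π:ℂ) * Complex.I) * h p) := by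
    intro p hp
    have hpd : dist p p₀ < 1 := mem_ball.1 hp
    have hpb1 : p.1 ∈ ball p₀.1 2 := by
      rw [mem_ball, dist_eq_norm]
      calc ‖p.1 - p₀.1‖ = ‖(p - p₀).1‖ := rfl
        _ ≤ ‖p - p₀‖ := norm_fst_le _
        _ < 2 := by rw [dist_eq_norm] at hpd; linarith
    have hpb2 : p.2 ∈ ball p₀.2 2 := by
      rw [mem_ball, dist_eq_norm]
      calc ‖p.2 - p₀.2‖ = ‖(p - p₀).2‖ := rfl
        _ ≤ ‖p - p₀‖ := norm_snd_le _
        _ < 2 := by rw [dist_eq_norm] at hpd; linarith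
    have hinner : ∀ θ : ℝ, (∫ φ, E 1 1 p (θ, φ) ∂μ)
        = (c θ * (w θ - p.1)⁻¹) * ((2 * (π:ℂ) * Complex.I) * h (w θ, p.2)) := by
      intro θ
      have hdiff : DifferentiableOn ℂ (fun z => h (w θ, z)) (closedBall p₀.2 2) :=
        (hh.comp ((differentiable_const (w θ)).prodMk differentiable_id)).differentiableOn
      have hcau := hdiff.circleIntegral_sub_inv_smul hpb2
      have e1 : (∫ φ, E 1 1 p (θ, φ) ∂μ)
          = ∮ z in C(p₀.2, 2), (c θ * (w θ - p.1)⁻¹) • ((z - p.2)⁻¹ • h (w θ, z)) := by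
        rw [circleIntegral, intervalIntegral.integral_of_le (by positivity)]
        apply MeasureTheory.integral_congr_ae
        apply Filter.Eventually.of_forall
        intro φ
        beta_reduce
        rw [deriv_circleMap, hE]
        simp only [smul_eq_mul]
        ring
      rw [e1, circleIntegral.integral_smul, hcau]
      simp only [smul_eq_mul]
      try ring
    have hdiff2 : DifferentiableOn ℂ
        (fun z => (2 * (π:ℂ) * Complex.I) * h (z, p.2)) (closedBall p₀.1 2) :=
      ((hh.comp (differentiable_id.prodMk (differentiable_const p.2))).const_mul _).differentiableOn
    have hcau2 := hdiff2.circleIntegral_sub_inv_smul hpb1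
    have e0 : K 1 1 p = ∫ θ, (∫ φ, E 1 1 p (θ, φ) ∂μ) ∂μ := by
      rw [hK]
      exact MeasureTheory.integral_prod _ (hEint 1 1 p hp)
    rw [e0]
    have e2 : (∫ θ, (∫ φ, E 1 1 p (θ, φ) ∂μ) ∂μ)
        = ∮ z in C(p₀.1, 2), (z - p.1)⁻¹ • ((2 * (π:ℂ) * Complex.I) * h (z, p.2)) := by
      rw [circleIntegral, intervalIntegral.integral_of_le (by positivity)]
      apply MeasureTheory.integral_congr_ae
      apply Filter.Eventually.of_forall
      intro θ
      beta_reduce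
      rw [hinner θ, deriv_circleMap]
      simp only [smul_eq_mul]
      ring
    rw [e2, hcau2]
    simp only [smul_eq_mul, Prod.mk.eta]
    try ring
  -- conclusion
  have hloc : ∀ p ∈ ball p₀ (1/2), fderiv ℂ h p u
      = ((2 * (π:ℂ) * Complex.I) * (2 * (π:ℂ) * Complex.I))⁻¹
          * (K 2 1 p * u.1 + K 1 2 p * u.2) := by
    intro p hp
    have hp1 : p ∈ ball p₀ 1 := ball_subset_ball (by norm_num) hp
    have heq : h =ᶠ[nhds p] fun q =>
        ((2 * (π:ℂ) * Complex.I) * (2 * (π:ℂ) * Complex.I))⁻¹ * K 1 1 q := by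
      apply Filter.eventually_of_mem (isOpen_ball.mem_nhds hp1)
      intro q hq
      beta_reduce
      rw [hCauchy q hq]
      field_simp
    rw [heq.fderiv_eq]
    have hKd := hKderiv 0 0 p hp
    have hKd' : HasFDerivAt (fun q =>
        ((2 * (π:ℂ) * Complex.I) * (2 * (π:ℂ) * Complex.I))⁻¹ * K 1 1 q)
        (((2 * (π:ℂ) * Complex.I) * (2 * (π:ℂ) * Complex.I))⁻¹ •
          ((((0:ℕ):ℂ)+1) * K (0+2) (0+1) p) • ContinuousLinearMap.fst ℂ ℂ ℂ
            + ((2 * (π:ℂ) * Complex.I) * (2 * (π:ℂ) * Complex.I))⁻¹ •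
          ((((0:ℕ):ℂ)+1) * K (0+1) (0+2) p) • ContinuousLinearMap.snd ℂ ℂ ℂ) p := by
      have := hKd.const_mul (((2 * (π:ℂ) * Complex.I) * (2 * (π:ℂ) * Complex.I))⁻¹)
      refine this.congr_fderiv ?_
      rw [smul_add]
    rw [hKd'.fderiv]
    simp only [ContinuousLinearMap.add_apply, ContinuousLinearMap.smul_apply,
      ContinuousLinearMap.coe_fst', ContinuousLinearMap.coe_snd', smul_eq_mul,
      Nat.cast_zero, zero_add]
    ring_nf
  have hd1 : DifferentiableAt ℂ (K 2 1) p₀ :=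
    (hKderiv 1 0 p₀ (mem_ball_self (by norm_num))).differentiableAt
  have hd2 : DifferentiableAt ℂ (K 1 2) p₀ :=
    (hKderiv 0 1 p₀ (mem_ball_self (by norm_num))).differentiableAt
  have hdr : DifferentiableAt ℂ (fun p =>
      ((2 * (π:ℂ) * Complex.I) * (2 * (π:ℂ) * Complex.I))⁻¹
        * (K 2 1 p * u.1 + K 1 2 p * u.2)) p₀ :=
    (((hd1.mul_const _).add (hd2.mul_const _)).const_mul _)
  apply hdr.congr_of_eventuallyEq
  exact Filter.eventually_of_mem (isOpen_ball.mem_nhds (mem_ball_self (by norm_num))) hloc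

end Aux

private lemma cartan_identity (A B C D x1 x2 x3 x4 x5 x6 x7 x8 : ℂ) :
    ee 1 * (x1 • ee 0 + C • ee 1 + x2 • ee 2 + B • ee 3)
      + ee 0 * (A • ee 0 + x3 • ee 1 + D • ee 2 + x4 • ee 3)
      - ee 3 * (B • ee 0 + x5 • ee 1 + C • ee 2 + x6 • ee 3)
      - ee 2 * (x7 • ee 0 + D • ee 1 + x8 • ee 2 + A • ee 3) = 0 := by
  simp only [ee, Matrix.cons_val_zero, Matrix.cons_val_one, Matrix.head_cons,
    Matrix.cons_val_two, Matrix.tail_cons, Matrix.cons_val_three]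
  ext <;>
    simp [Quaternion.re_mul, Quaternion.imI_mul, Quaternion.imJ_mul, Quaternion.imK_mul,
      Quaternion.re_smul, Quaternion.imI_smul, Quaternion.imJ_smul, Quaternion.imK_smul,
        show qI.re = 0 from rfl, show qI.imI = 1 from rfl, show qI.imJ = 0 from rfl, show qI.imK = 0 from rfl,
        show qJ.re = 0 from rfl, show qJ.imI = 0 from rfl, show qJ.imJ = 1 from rfl, show qJ.imK = 0 from rfl,
        show qK.re = 0 from rfl, show qK.imI = 0 from rfl, show qK.imJ = 0 from rfl, show qK.imK = 1 from rfl] <;>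
    (ring_nf; try (simp only [Complex.I_sq]; ring_nf))

/-- projection CLM -/
def pr2 (i j : Fin 4) : (Fin 4 → ℂ) →L[ℂ] ℂ × ℂ :=
  (ContinuousLinearMap.proj (R := ℂ) (φ := fun _ : Fin 4 => ℂ) i).prod
    (ContinuousLinearMap.proj (R := ℂ) (φ := fun _ : Fin 4 => ℂ) j)

lemma pr2_apply (i j : Fin 4) (z : Fin 4 → ℂ) : pr2 i j z = (z i, z j) := rfl

/-- the function
`f = g(z₂,z₃) e₁ + h(z₁,z₄) e₂ + (z₃ ∂h/∂w₁ + z₂ ∂h/∂w₂) e₃ + (z₄ ∂g/∂w₁ + z₁ ∂g/∂w₂) e₄`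
satisfies `e₂ ∂f/∂z₁ + e₁ ∂f/∂z₂ - e₄ ∂f/∂z₃ - e₃ ∂f/∂z₄ = 0` on ℂ⁴ (indexed from 0). -/
theorem solution_of_cartan_equation
    (g h : ℂ × ℂ → ℂ) (hg : Differentiable ℂ g) (hh : Differentiable ℂ h)
    (f : Fin 4 → (Fin 4 → ℂ) → ℂ)
    (hf0 : ∀ z : Fin 4 → ℂ, f 0 z = g (z 1, z 2))
    (hf1 : ∀ z : Fin 4 → ℂ, f 1 z = h (z 0, z 3))
    (hf2 : ∀ z : Fin 4 → ℂ, f 2 z = z 2 * pda h (z 0, z 3) + z 1 * pdb h (z 0, z 3))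
    (hf3 : ∀ z : Fin 4 → ℂ, f 3 z = z 3 * pda g (z 1, z 2) + z 0 * pdb g (z 1, z 2)) :
    ∀ z : Fin 4 → ℂ,
      ee 1 * Dc f 0 z + ee 0 * Dc f 1 z - ee 3 * Dc f 2 z - ee 2 * Dc f 3 z = 0 := by
  have F0 : f 0 = fun z => g (z 1, z 2) := funext hf0
  have F1 : f 1 = fun z => h (z 0, z 3) := funext hf1
  have F2 : f 2 = fun z => z 2 * pda h (z 0, z 3) + z 1 * pdb h (z 0, z 3) := funext hf2
  have F3 : f 3 = fun z => z 3 * pda g (z 1, z 2) + z 0 * pdb g (z 1, z 2) := funext hf3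
  intro z
  -- derivative of f 0 and f 1
  have h0 : HasFDerivAt (f 0) ((fderiv ℂ g (pr2 1 2 z)).comp (pr2 1 2)) z := by
    rw [F0]
    exact ((hg (pr2 1 2 z)).hasFDerivAt).comp z (pr2 1 2).hasFDerivAt
  have h1 : HasFDerivAt (f 1) ((fderiv ℂ h (pr2 0 3 z)).comp (pr2 0 3)) z := by
    rw [F1]
    exact ((hh (pr2 0 3 z)).hasFDerivAt).comp z (pr2 0 3).hasFDerivAt
  -- derivatives of the coefficient functions
  have hA : HasFDerivAt (fun y : Fin 4 → ℂ => pda h (y 0, y 3))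
      ((fderiv ℂ (pda h) (pr2 0 3 z)).comp (pr2 0 3)) z :=
    ((keyDiff h hh ((1:ℂ), (0:ℂ)) (pr2 0 3 z)).hasFDerivAt).comp z (pr2 0 3).hasFDerivAt
  have hB : HasFDerivAt (fun y : Fin 4 → ℂ => pdb h (y 0, y 3))
      ((fderiv ℂ (pdb h) (pr2 0 3 z)).comp (pr2 0 3)) z :=
    ((keyDiff h hh ((0:ℂ), (1:ℂ)) (pr2 0 3 z)).hasFDerivAt).comp z (pr2 0 3).hasFDerivAt
  have hC : HasFDerivAt (fun y : Fin 4 → ℂ => pda g (y 1, y 2))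
      ((fderiv ℂ (pda g) (pr2 1 2 z)).comp (pr2 1 2)) z :=
    ((keyDiff g hg ((1:ℂ), (0:ℂ)) (pr2 1 2 z)).hasFDerivAt).comp z (pr2 1 2).hasFDerivAt
  have hD : HasFDerivAt (fun y : Fin 4 → ℂ => pdb g (y 1, y 2))
      ((fderiv ℂ (pdb g) (pr2 1 2 z)).comp (pr2 1 2)) z :=
    ((keyDiff g hg ((0:ℂ), (1:ℂ)) (pr2 1 2 z)).hasFDerivAt).comp z (pr2 1 2).hasFDerivAt
  have hp2 : HasFDerivAt (fun y : Fin 4 → ℂ => y 2)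
      (ContinuousLinearMap.proj (R := ℂ) (φ := fun _ : Fin 4 => ℂ) 2) z :=
    (ContinuousLinearMap.proj (R := ℂ) (φ := fun _ : Fin 4 => ℂ) 2).hasFDerivAt
  have hp1 : HasFDerivAt (fun y : Fin 4 → ℂ => y 1)
      (ContinuousLinearMap.proj (R := ℂ) (φ := fun _ : Fin 4 => ℂ) 1) z :=
    (ContinuousLinearMap.proj (R := ℂ) (φ := fun _ : Fin 4 => ℂ) 1).hasFDerivAt
  have hp3 : HasFDerivAt (fun y : Fin 4 → ℂ => y 3)
      (ContinuousLinearMap.proj (R := ℂ) (φ := fun _ : Fin 4 => ℂ) 3) z :=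
    (ContinuousLinearMap.proj (R := ℂ) (φ := fun _ : Fin 4 => ℂ) 3).hasFDerivAt
  have hp0 : HasFDerivAt (fun y : Fin 4 → ℂ => y 0)
      (ContinuousLinearMap.proj (R := ℂ) (φ := fun _ : Fin 4 => ℂ) 0) z :=
    (ContinuousLinearMap.proj (R := ℂ) (φ := fun _ : Fin 4 => ℂ) 0).hasFDerivAt
  have h2 : HasFDerivAt (f 2)
      ((z 2 • ((fderiv ℂ (pda h) (pr2 0 3 z)).comp (pr2 0 3))
          + pda h (pr2 0 3 z) • (ContinuousLinearMap.proj (R := ℂ) (φ := fun _ : Fin 4 => ℂ) 2))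
        + (z 1 • ((fderiv ℂ (pdb h) (pr2 0 3 z)).comp (pr2 0 3))
          + pdb h (pr2 0 3 z) • (ContinuousLinearMap.proj (R := ℂ) (φ := fun _ : Fin 4 => ℂ) 1))) z := by
    rw [F2]
    exact (hp2.mul hA).add (hp1.mul hB)
  have h3 : HasFDerivAt (f 3)
      ((z 3 • ((fderiv ℂ (pda g) (pr2 1 2 z)).comp (pr2 1 2))
          + pda g (pr2 1 2 z) • (ContinuousLinearMap.proj (R := ℂ) (φ := fun _ : Fin 4 => ℂ) 3))
        + (z 0 • ((fderiv ℂ (pdb g) (pr2 1 2 z)).comp (pr2 1 2))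
          + pdb g (pr2 1 2 z) • (ContinuousLinearMap.proj (R := ℂ) (φ := fun _ : Fin 4 => ℂ) 0))) z := by
    rw [F3]
    exact (hp3.mul hC).add (hp0.mul hD)
  -- the eight needed partial derivatives
  have e10 : pd 1 (f 0) z = pda g (z 1, z 2) := by
    rw [pd, h0.fderiv]
    have e : pr2 1 2 (Pi.single 1 1) = ((1:ℂ), (0:ℂ)) := by
      rw [pr2_apply]
      simp [Pi.single_apply]
      try decide
    show fderiv ℂ g (pr2 1 2 z) (pr2 1 2 (Pi.single 1 1)) = _
    rw [e]
    rfl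
  have e20 : pd 2 (f 0) z = pdb g (z 1, z 2) := by
    rw [pd, h0.fderiv]
    have e : pr2 1 2 (Pi.single 2 1) = ((0:ℂ), (1:ℂ)) := by
      rw [pr2_apply]; simp [Pi.single_apply]
      try decide
    show fderiv ℂ g (pr2 1 2 z) (pr2 1 2 (Pi.single 2 1)) = _
    rw [e]; rfl
  have e01 : pd 0 (f 1) z = pda h (z 0, z 3) := by
    rw [pd, h1.fderiv]
    have e : pr2 0 3 (Pi.single 0 1) = ((1:ℂ), (0:ℂ)) := by
      rw [pr2_apply]; simp [Pi.single_apply]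
      try decide
    show fderiv ℂ h (pr2 0 3 z) (pr2 0 3 (Pi.single 0 1)) = _
    rw [e]; rfl
  have e31 : pd 3 (f 1) z = pdb h (z 0, z 3) := by
    rw [pd, h1.fderiv]
    have e : pr2 0 3 (Pi.single 3 1) = ((0:ℂ), (1:ℂ)) := by
      rw [pr2_apply]; simp [Pi.single_apply]
      try decide
    show fderiv ℂ h (pr2 0 3 z) (pr2 0 3 (Pi.single 3 1)) = _
    rw [e]; rfl
  have e22 : pd 2 (f 2) z = pda h (z 0, z 3) := by
    rw [pd, h2.fderiv]
    have e : pr2 0 3 (Pi.single 2 1) = (0 : ℂ × ℂ) := by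
      rw [pr2_apply]; simp [Pi.single_apply, Prod.ext_iff]
      try decide
    simp only [ContinuousLinearMap.add_apply, ContinuousLinearMap.smul_apply,
      ContinuousLinearMap.comp_apply, ContinuousLinearMap.proj_apply, e, map_zero,
      smul_eq_mul, mul_zero, zero_add, add_zero, Pi.single_eq_same]
    simp [pr2_apply, Pi.single_apply]
  have e12 : pd 1 (f 2) z = pdb h (z 0, z 3) := by
    rw [pd, h2.fderiv]
    have e : pr2 0 3 (Pi.single 1 1) = (0 : ℂ × ℂ) := by
      rw [pr2_apply]; simp [Pi.single_apply, Prod.ext_iff]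
      try decide
    simp only [ContinuousLinearMap.add_apply, ContinuousLinearMap.smul_apply,
      ContinuousLinearMap.comp_apply, ContinuousLinearMap.proj_apply, e, map_zero,
      smul_eq_mul, mul_zero, zero_add, add_zero, Pi.single_eq_same]
    simp [pr2_apply, Pi.single_apply]
  have e33 : pd 3 (f 3) z = pda g (z 1, z 2) := by
    rw [pd, h3.fderiv]
    have e : pr2 1 2 (Pi.single 3 1) = (0 : ℂ × ℂ) := by
      rw [pr2_apply]; simp [Pi.single_apply, Prod.ext_iff]
      try decide
    simp only [ContinuousLinearMap.add_apply, ContinuousLinearMap.smul_apply,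
      ContinuousLinearMap.comp_apply, ContinuousLinearMap.proj_apply, e, map_zero,
      smul_eq_mul, mul_zero, zero_add, add_zero, Pi.single_eq_same]
    simp [pr2_apply, Pi.single_apply]
  have e03 : pd 0 (f 3) z = pdb g (z 1, z 2) := by
    rw [pd, h3.fderiv]
    have e : pr2 1 2 (Pi.single 0 1) = (0 : ℂ × ℂ) := by
      rw [pr2_apply]; simp [Pi.single_apply, Prod.ext_iff]
      try decide
    simp only [ContinuousLinearMap.add_apply, ContinuousLinearMap.smul_apply,
      ContinuousLinearMap.comp_apply, ContinuousLinearMap.proj_apply, e, map_zero,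
      smul_eq_mul, mul_zero, zero_add, add_zero, Pi.single_eq_same]
    simp [pr2_apply, Pi.single_apply]
  -- assemble
  simp only [Dc, Fin.sum_univ_four]
  rw [e10, e20, e01, e31, e22, e12, e33, e03]
  exact cartan_identity (pda g (z 1, z 2)) (pdb g (z 1, z 2)) (pda h (z 0, z 3)) (pdb h (z 0, z 3))
    (pd 0 (f 0) z) (pd 0 (f 2) z) (pd 1 (f 1) z) (pd 1 (f 3) z)
    (pd 2 (f 1) z) (pd 2 (f 3) z) (pd 3 (f 0) z) (pd 3 (f 2) z)
end
end

section
/- Let α_1,α_2,α_3,α_4,λ,μ,θ,ϑ,ν,η ∈ ℂ with α_1α_2 ≠ α_3α_4, and set ψ_1 = α_1e_1 + α_2e_2 + α_3e_3 + α_4e_4, ψ_2 = λα_1e_1 + μα_2e_2 + μα_3e_3 + λα_4e_4, ψ_3 = θα_1e_1 + ϑα_2e_2 + ϑα_3e_3 + θα_4e_4, ψ_4 = να_1e_1 + ηα_2e_2 + ηα_3e_3 + να_4e_4. Suppose f : ℂ⁴ → ℍ(ℂ), f = f_1e_1 + f_2e_2 + f_3e_3 + f_4e_4 with f_1,…,f_4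 : ℂ⁴ → ℂ holomorphic, satisfies ψ_1 ∂f/∂z_1 + ψ_2 ∂f/∂z_2 + ψ_3 ∂f/∂z_3 + ψ_4 ∂f/∂z_4 = 0 on ℂ⁴. Then the components f_1 and f_3 satisfy the transport equation ∂u/∂z_1 + λ ∂u/∂z_2 + θ ∂u/∂z_3 + ν ∂u/∂z_4 = 0 on ℂ⁴, and the components f_2 and f_4 satisfy the transport equation ∂u/∂z_1 + μ ∂u/∂z_2 + ϑ ∂u/∂z_3 + η ∂u/∂z_4 = 0 on ℂ⁴. -/
noncomputable section

open Quaternion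

set_option maxHeartbeats 4000000 in
set_option maxRecDepth 10000 in
/-- Auxiliary algebraic lemma: extracting the transport combinations from the
componentwise quaternion equation. -/
theorem aux_cartan_extract (a1 a2 a3 a4 lam mu th vth nu eta : ℂ)
    (p0 q0 r0 s0 p1 q1 r1 s1 p2 q2 r2 s2 p3 q3 r3 s3 : ℂ)
    (h : (a1 • ee 0 + a2 • ee 1 + a3 • ee 2 + a4 • ee 3) *
          (p0 • ee 0 + q0 • ee 1 + r0 • ee 2 + s0 • ee 3)
       + ((lam*a1) • ee 0 + (mu*a2) • ee 1 + (mu*a3) • ee 2 + (lam*a4) • ee 3) *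
          (p1 • ee 0 + q1 • ee 1 + r1 • ee 2 + s1 • ee 3)
       + ((th*a1) • ee 0 + (vth*a2) • ee 1 + (vth*a3) • ee 2 + (th*a4) • ee 3) *
          (p2 • ee 0 + q2 • ee 1 + r2 • ee 2 + s2 • ee 3)
       + ((nu*a1) • ee 0 + (eta*a2) • ee 1 + (eta*a3) • ee 2 + (nu*a4) • ee 3) *
          (p3 • ee 0 + q3 • ee 1 + r3 • ee 2 + s3 • ee 3) = 0) :
    (a1*a2 - a3*a4) * (p0 + lam*p1 + th*p2 + nu*p3) = 0 ∧
    (a1*a2 - a3*a4) * (r0 + lam*r1 + th*r2 + nu*r3) = 0 ∧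
    (a1*a2 - a3*a4) * (q0 + mu*q1 + vth*q2 + eta*q3) = 0 ∧
    (a1*a2 - a3*a4) * (s0 + mu*s1 + vth*s2 + eta*s3) = 0 := by
  rw [Quaternion.ext_iff] at h
  obtain ⟨h1, h2, h3, h4⟩ := h
  replace h2 := congrArg (Complex.I * ·) h2
  replace h3 := congrArg (Complex.I * ·) h3
  simp only [mul_zero, Quaternion.imI_zero, Quaternion.imJ_zero] at h2 h3
  simp only [ee, Matrix.cons_val_zero, Matrix.cons_val_one, Matrix.head_cons,
    Matrix.cons_val_two, Matrix.tail_cons, Matrix.cons_val_three,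
    Quaternion.re_mul, Quaternion.imI_mul, Quaternion.imJ_mul, Quaternion.imK_mul,
    Quaternion.re_add, Quaternion.imI_add, Quaternion.imJ_add, Quaternion.imK_add,
    Quaternion.re_smul, Quaternion.imI_smul, Quaternion.imJ_smul, Quaternion.imK_smul,
    Quaternion.re_sub, Quaternion.imI_sub, Quaternion.imJ_sub, Quaternion.imK_sub,
    Quaternion.re_one, Quaternion.imI_one, Quaternion.imJ_one, Quaternion.imK_one,
    Quaternion.re_zero, Quaternion.imI_zero, Quaternion.imJ_zero, Quaternion.imK_zero,
    smul_eq_mul] at h1 h2 h3 h4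
  simp only [qI, qJ, qK, smul_eq_mul] at h1 h2 h3 h4
  ring_nf at h1 h2 h3 h4
  simp only [Complex.I_sq] at h1 h2 h3 h4
  ring_nf at h1 h2 h3 h4
  refine ⟨?_, ?_, ?_, ?_⟩
  · linear_combination a2*h1 - a2*h2 + a3*h3 - a3*h4
  · linear_combination -a3*h1 - a3*h2 - a2*h3 - a2*h4
  · linear_combination a1*h1 + a1*h2 + a4*h3 + a4*h4
  · linear_combination -a4*h1 + a4*h2 - a1*h3 + a1*h4

/-- if `f = f₁e₁ + f₂e₂ + f₃e₃ + f₄e₄` is left-ψ-hyperholomorphic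
for the special weights ψ₁,ψ₂,ψ₃,ψ₄ (with `α₁α₂ ≠ α₃α₄`), then `f₁, f₃` satisfy
the transport equation `∂u/∂z₁ + λ ∂u/∂z₂ + θ ∂u/∂z₃ + ν ∂u/∂z₄ = 0` and
`f₂, f₄` satisfy `∂u/∂z₁ + μ ∂u/∂z₂ + ϑ ∂u/∂z₃ + η ∂u/∂z₄ = 0`
(everything indexed from 0). -/
theorem components_satisfy_transport_equations
    (a1 a2 a3 a4 lam mu th vth nu eta : ℂ) (ha : a1 * a2 ≠ a3 * a4)
    (ψ1 ψ2 ψ3 ψ4 : ℍ[ℂ])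
    (hψ1 : ψ1 = a1 • ee 0 + a2 • ee 1 + a3 • ee 2 + a4 • ee 3)
    (hψ2 : ψ2 = (lam * a1) • ee 0 + (mu * a2) • ee 1 + (mu * a3) • ee 2 + (lam * a4) • ee 3)
    (hψ3 : ψ3 = (th * a1) • ee 0 + (vth * a2) • ee 1 + (vth * a3) • ee 2 + (th * a4) • ee 3)
    (hψ4 : ψ4 = (nu * a1) • ee 0 + (eta * a2) • ee 1 + (eta * a3) • ee 2 + (nu * a4) • ee 3)
    (f : Fin 4 → (Fin 4 → ℂ) → ℂ) (hf : ∀ k, Differentiable ℂ (f k))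
    (heq : ∀ z : Fin 4 → ℂ,
      ψ1 * Dc f 0 z + ψ2 * Dc f 1 z + ψ3 * Dc f 2 z + ψ4 * Dc f 3 z = 0) :
    (∀ z : Fin 4 → ℂ,
      pd 0 (f 0) z + lam * pd 1 (f 0) z + th * pd 2 (f 0) z + nu * pd 3 (f 0) z = 0) ∧
    (∀ z : Fin 4 → ℂ,
      pd 0 (f 2) z + lam * pd 1 (f 2) z + th * pd 2 (f 2) z + nu * pd 3 (f 2) z = 0) ∧
    (∀ z : Fin 4 → ℂ,
      pd 0 (f 1) z + mu * pd 1 (f 1) z + vth * pd 2 (f 1) z + eta * pd 3 (f 1) z = 0) ∧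
    (∀ z : Fin 4 → ℂ,
      pd 0 (f 3) z + mu * pd 1 (f 3) z + vth * pd 2 (f 3) z + eta * pd 3 (f 3) z = 0) := by
  have hd : a1 * a2 - a3 * a4 ≠ 0 := sub_ne_zero.mpr ha
  have key : ∀ z : Fin 4 → ℂ,
      (a1*a2 - a3*a4) * (pd 0 (f 0) z + lam * pd 1 (f 0) z + th * pd 2 (f 0) z + nu * pd 3 (f 0) z) = 0 ∧
      (a1*a2 - a3*a4) * (pd 0 (f 2) z + lam * pd 1 (f 2) z + th * pd 2 (f 2) z + nu * pd 3 (f 2) z) = 0 ∧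
      (a1*a2 - a3*a4) * (pd 0 (f 1) z + mu * pd 1 (f 1) z + vth * pd 2 (f 1) z + eta * pd 3 (f 1) z) = 0 ∧
      (a1*a2 - a3*a4) * (pd 0 (f 3) z + mu * pd 1 (f 3) z + vth * pd 2 (f 3) z + eta * pd 3 (f 3) z) = 0 := by
    intro z
    have h := heq z
    rw [hψ1, hψ2, hψ3, hψ4] at h
    simp only [Dc, Fin.sum_univ_four] at h
    exact aux_cartan_extract a1 a2 a3 a4 lam mu th vth nu eta _ _ _ _ _ _ _ _ _ _ _ _ _ _ _ _ h
  refine ⟨fun z => ?_, fun z => ?_, fun z => ?_, fun z => ?_⟩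
  · exact (mul_eq_zero.mp (key z).1).resolve_left hd
  · exact (mul_eq_zero.mp (key z).2.1).resolve_left hd
  · exact (mul_eq_zero.mp (key z).2.2.1).resolve_left hd
  · exact (mul_eq_zero.mp (key z).2.2.2).resolve_left hd
end
end

section
/- Let Ω ⊆ ℂ² be open, regard ζ = z_1 e_1 + z_2 e_2 for (z_1,z_2) ∈ Ω as a bicomplex variable, and let f : Ω → ℍ(ℂ) have holomorphic components. Suppose f is right-𝔹ℂ-hyperholomorphic, i.e. there exists f'_r : Ω → ℍ(ℂ) such that for every h = h_1 e_1 + h_2 e_2 with h_1,h_2 ∈ ℂ, the limit as the complex parameter ε → 0 (ε ≠ 0) of ε⁻¹ ( f(ζ + εh) − f(ζ) ) exists and equals h · f'_r(ζ) for every ζ ∈ Ω. Then f satisfies the Cauchy–Riemann type condition e_2 ∂f/∂z_1 = e_1 ∂f/∂z_2 on Ω; equivalently, f satisfies the left-ψ-hyperholomorphy equation with ψ_1 = e_2, ψ_2 = −e_1, ψ_3 = ψ_4 = 0. -/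
noncomputable section

open Quaternion

lemma ee01 : ee 0 * ee 1 = 0 := by
  ext <;> simp [ee, QuaternionAlgebra.re_mul, QuaternionAlgebra.imI_mul,
    QuaternionAlgebra.imJ_mul, QuaternionAlgebra.imK_mul, Quaternion.re_smul, Complex.ext_iff] <;> simp [qI, Complex.ext_iff]
lemma ee10 : ee 1 * ee 0 = 0 := by
  ext <;> simp [ee, QuaternionAlgebra.re_mul, QuaternionAlgebra.imI_mul,
    QuaternionAlgebra.imJ_mul, QuaternionAlgebra.imK_mul, Quaternion.re_smul, Complex.ext_iff] <;> simp [qI, Complex.ext_iff]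

/-- a right-𝔹ℂ-hyperholomorphic function `f(ζ) = Σ fₖ(z₁,z₂) eₖ`
(the limit of `ε⁻¹(f(ζ+εh) - f(ζ))` exists and equals `h ⬝ f'_r(ζ)` for every
`h = h₁e₁ + h₂e₂ ∈ 𝔹ℂ`, the limit being taken componentwise via the linear
identification of ℍ(ℂ) with ℂ⁴) satisfies `e₂ ∂f/∂z₁ = e₁ ∂f/∂z₂` on Ω; equivalently
it is left-ψ-hyperholomorphic with `ψ₁ = e₂, ψ₂ = -e₁, ψ₃ = ψ₄ = 0`. -/
theorem right_BC_hyperholomorphic_satisfies_CR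
    (Ω : Set (ℂ × ℂ)) (hΩ : IsOpen Ω)
    (f : Fin 4 → ℂ × ℂ → ℂ) (hf : ∀ k, DifferentiableOn ℂ (f k) Ω)
    (F : ℂ × ℂ → ℍ[ℂ]) (hF : ∀ p, F p = ∑ k, f k p • ee k)
    (fr : ℂ × ℂ → ℍ[ℂ])
    (hfr : ∀ p ∈ Ω, ∀ h1 h2 : ℂ,
      Filter.Tendsto
        (fun ε : ℂ => QuaternionAlgebra.equivTuple (-1 : ℂ) (0 : ℂ) (-1 : ℂ)
          (ε⁻¹ • (F (p.1 + ε * h1, p.2 + ε * h2) - F p)))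
        (nhdsWithin 0 {(0 : ℂ)}ᶜ)
        (nhds (QuaternionAlgebra.equivTuple (-1 : ℂ) (0 : ℂ) (-1 : ℂ)
          ((h1 • ee 0 + h2 • ee 1) * fr p)))) :
    ∀ p ∈ Ω,
      ee 1 * (∑ k, pda (f k) p • ee k) = ee 0 * (∑ k, pdb (f k) p • ee k) ∧
      ee 1 * (∑ k, pda (f k) p • ee k) + (-(ee 0)) * (∑ k, pdb (f k) p • ee k) = 0 := by
  intro p hp
  have hdiff : ∀ k, DifferentiableAt ℂ (f k) p := fun k =>
    (hf k).differentiableAt (hΩ.mem_nhds hp)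
  set E : ℍ[ℂ] ≃ₗ[ℂ] (Fin 4 → ℂ) := QuaternionAlgebra.linearEquivTuple (-1 : ℂ) (0 : ℂ) (-1 : ℂ) with hE
  have hEe : ⇑E = ⇑(QuaternionAlgebra.equivTuple (-1 : ℂ) (0 : ℂ) (-1 : ℂ)) :=
    QuaternionAlgebra.coe_linearEquivTuple _ _ _
  have key : ∀ h1 h2 : ℂ, (h1 • ee 0 + h2 • ee 1) * fr p
      = ∑ k, (h1 * pda (f k) p + h2 * pdb (f k) p) • ee k := by
    intro h1 h2
    -- slope limit for each component
    have hslope : ∀ k : Fin 4, Filter.Tendsto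
        (fun ε : ℂ => ε⁻¹ * (f k (p.1 + ε * h1, p.2 + ε * h2) - f k p))
        (nhdsWithin 0 {(0 : ℂ)}ᶜ)
        (nhds (h1 * pda (f k) p + h2 * pdb (f k) p)) := by
      intro k
      have hφ : HasDerivAt (fun ε : ℂ => (p.1 + ε * h1, p.2 + ε * h2)) ((h1, h2) : ℂ × ℂ) 0 := by
        have h1' : HasDerivAt (fun ε : ℂ => p.1 + ε * h1) h1 0 :=
          ((hasDerivAt_id (0:ℂ)).mul_const h1).const_add p.1 |>.congr_deriv (by ring)
        have h2' : HasDerivAt (fun ε : ℂ => p.2 + ε * h2) h2 0 :=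
          ((hasDerivAt_id (0:ℂ)).mul_const h2).const_add p.2 |>.congr_deriv (by ring)
        exact h1'.prodMk h2'
      have hFd : HasFDerivAt (f k) (fderiv ℂ (f k) p) (p.1 + 0 * h1, p.2 + 0 * h2) := by
        simpa using (hdiff k).hasFDerivAt
      have hcomp : HasDerivAt (fun ε : ℂ => f k (p.1 + ε * h1, p.2 + ε * h2))
          (fderiv ℂ (f k) p ((h1, h2) : ℂ × ℂ)) 0 := hFd.comp_hasDerivAt 0 hφ
      have hval : fderiv ℂ (f k) p ((h1, h2) : ℂ × ℂ)
          = h1 * pda (f k) p + h2 * pdb (f k) p := by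
        have : ((h1, h2) : ℂ × ℂ) = h1 • ((1,0) : ℂ × ℂ) + h2 • ((0,1) : ℂ × ℂ) := by
          simp [Prod.ext_iff]
        rw [this, map_add, map_smul, map_smul]
        simp [pda, pdb, smul_eq_mul]
      rw [hval] at hcomp
      have hs := hasDerivAt_iff_tendsto_slope.mp hcomp
      refine hs.congr' ?_
      filter_upwards [self_mem_nhdsWithin] with ε hε
      simp [slope_def_field, div_eq_inv_mul]
    set L : ℍ[ℂ] := ∑ k, (h1 * pda (f k) p + h2 * pdb (f k) p) • ee k with hL
    have hrw : ∀ q : ℂ × ℂ, ∀ ε : ℂ, E (ε⁻¹ • (F q - F p))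
        = ∑ k, (ε⁻¹ * (f k q - f k p)) • E (ee k) := by
      intro q ε
      simp only [map_smul, map_sub, hF, map_sum]
      rw [← Finset.sum_sub_distrib, Finset.smul_sum]
      congr 1; ext k; rw [← sub_smul, smul_smul]
    have hmain : Filter.Tendsto
        (fun ε : ℂ => E (ε⁻¹ • (F (p.1 + ε * h1, p.2 + ε * h2) - F p)))
        (nhdsWithin 0 {(0 : ℂ)}ᶜ) (nhds (E L)) := by
      have hEL : E L = ∑ k, (h1 * pda (f k) p + h2 * pdb (f k) p) • E (ee k) := by
        simp only [hL, map_sum, map_smul]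
      rw [hEL]
      refine Filter.Tendsto.congr (fun ε => (hrw _ ε).symm) ?_
      exact tendsto_finset_sum _ fun k _ => (hslope k).smul_const (E (ee k))
    have hfr' := hfr p hp h1 h2
    rw [show ⇑(QuaternionAlgebra.equivTuple (-1 : ℂ) (0 : ℂ) (-1 : ℂ)) = ⇑E from hEe.symm] at hfr'
    exact E.injective (tendsto_nhds_unique hfr' hmain)
  have e0 : (1:ℂ) • ee 0 + (0:ℂ) • ee 1 = ee 0 := by ext <;> simp [ee, qI]
  have e1 : (0:ℂ) • ee 0 + (1:ℂ) • ee 1 = ee 1 := by ext <;> simp [ee, qI]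
  have hA : ee 0 * fr p = ∑ k, pda (f k) p • ee k := by
    have h := key 1 0
    rw [e0] at h
    simpa using h
  have hB : ee 1 * fr p = ∑ k, pdb (f k) p • ee k := by
    have h := key 0 1
    rw [e1] at h
    simpa using h
  have h1 : ee 1 * (∑ k, pda (f k) p • ee k) = 0 := by
    rw [← hA, ← mul_assoc, ee10, zero_mul]
  have h2 : ee 0 * (∑ k, pdb (f k) p • ee k) = 0 := by
    rw [← hB, ← mul_assoc, ee01, zero_mul]
  refine ⟨by rw [h1, h2], ?_⟩
  have h3 : (-(ee 0)) * (∑ k, pdb (f k) p • ee k)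
      = -(ee 0 * ∑ k, pdb (f k) p • ee k) := @neg_mul ℍ[ℂ] _ _ _ _
  rw [h1, h3, h2, neg_zero, add_zero]
end
end
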